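/- Let n ≥ 2 be even, m > 1, and G a non-regular bipartite graph of order m in which all vertices of one partite set have common degree a and all vertices of the other partite set have common degree b, with a ≠ b. Then χ_ld(G[\overline{K_n}]) = 2. -/

import Mathlib

open Finset

open Classical in
/-- The weight of a vertex: sum of labels of its neighbors. -/
noncomputable def ldWeight {V : Type*} (G : SimpleGraph V) [Fintype V] (f : V → ℕ) (v : V) : ℕ :=
  ∑ x ∈ Finset.univ, if G.Adj v x then f x else 0

/-- `f` is a local distance antimagic labeling of `G`: a bijection onto `{1,…,|V|}`
with adjacent vertices getting distinct weights. -/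
def IsLDAL {V : Type*} (G : SimpleGraph V) [Fintype V] (f : V → ℕ) : Prop :=
  Set.BijOn f Set.univ (Set.Icc 1 (Fintype.card V)) ∧
    ∀ ⦃u v : V⦄, G.Adj u v → ldWeight G f u ≠ ldWeight G f v

/-- The local distance antimagic chromatic number: minimum number of distinct weights. -/
noncomputable def chiLD {V : Type*} (G : SimpleGraph V) [Fintype V] : ℕ :=
  sInf {k | ∃ f : V → ℕ, IsLDAL G f ∧ (Finset.univ.image (ldWeight G f)).card = k}

/-- The join `G + H` of two graphs. -/
def graphJoin {α β : Type*} (G : SimpleGraph α) (H : SimpleGraph β) :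
    SimpleGraph (α ⊕ β) where
  Adj x y :=
    match x, y with
    | Sum.inl a, Sum.inl b => G.Adj a b
    | Sum.inr a, Sum.inr b => H.Adj a b
    | Sum.inl _, Sum.inr _ => True
    | Sum.inr _, Sum.inl _ => True
  symm := by
    constructor
    rintro (a | a) (b | b) h
    exacts [h.symm, trivial, trivial, h.symm]
  loopless := by
    constructor
    rintro (a | a) h
    exacts [G.loopless.irrefl a h, H.loopless.irrefl a h]

/-- The lexicographic product `G[H]`. -/
def lexProd {α β : Type*} (G : SimpleGraph α) (H : SimpleGraph β) :
    SimpleGraph (α × β) where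
  Adj x y := G.Adj x.1 y.1 ∨ (x.1 = y.1 ∧ H.Adj x.2 y.2)
  symm := by
    constructor
    rintro x y (h | ⟨e, h⟩)
    exacts [Or.inl h.symm, Or.inr ⟨e.symm, h.symm⟩]
  loopless := by
    constructor
    rintro x (h | ⟨e, h⟩)
    exacts [G.loopless.irrefl _ h, H.loopless.irrefl _ h]

/-- The friendship graph `F_n`: `n` triangles sharing the central vertex `none`. -/
def friendship (n : ℕ) : SimpleGraph (Option (Fin n × Fin 2)) where
  Adj x y := x ≠ y ∧ (x = none ∨ y = none ∨ ∃ i a b, x = some (i, a) ∧ y = some (i, b))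
  symm := by
    constructor
    rintro x y ⟨hne, h⟩
    refine ⟨hne.symm, ?_⟩
    rcases h with h | h | ⟨i, a, b, hx, hy⟩
    · exact Or.inr (Or.inl h)
    · exact Or.inl h
    · exact Or.inr (Or.inr ⟨i, b, a, hy, hx⟩)
  loopless := ⟨fun x h => h.1 rfl⟩

/-- The bistar `B_{n,n}`: two adjacent centers, each with `n` leaves. -/
def bistar (n : ℕ) : SimpleGraph (Bool ⊕ Bool × Fin n) where
  Adj x y :=
    match x, y with
    | Sum.inl a, Sum.inl b => a ≠ b
    | Sum.inl a, Sum.inr (c, _) => a = c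
    | Sum.inr (c, _), Sum.inl a => a = c
    | Sum.inr _, Sum.inr _ => False
  symm := by
    constructor
    rintro (a | ⟨c, i⟩) (b | ⟨d, j⟩) h
    exacts [h.symm, h, h, h.elim]
  loopless := by
    constructor
    rintro (a | ⟨c, i⟩) h
    exacts [h rfl, h]

/-- The standard matrix label: row `i`, column `j`, with alternating direction. -/
def lbl (m j i : ℕ) : ℕ := i * m + (if Even i then j else m - 1 - j) + 1

lemma sum_ite_even (k j j' : ℕ) :
    ∑ i ∈ Finset.range (2 * k), (if Even i then j else j') = k * (j + j') := by
  induction k with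
  | zero => simp
  | succ k ih =>
    have h1 : Even (2 * k) := even_two_mul k
    have h2 : ¬ Even (2 * k + 1) := by simp [Nat.even_add_one, h1]
    rw [show 2 * (k + 1) = 2 * k + 1 + 1 by ring, Finset.sum_range_succ, Finset.sum_range_succ,
      ih, if_pos h1, if_neg h2]
    ring

lemma lbl_sum (m k j : ℕ) (hj : j < m) :
    ∑ i ∈ Finset.range (2 * k), lbl m j i =
      (∑ i ∈ Finset.range (2 * k), (i * m + 1)) + k * (m - 1) := by
  have h1 : ∀ i ∈ Finset.range (2 * k),
      lbl m j i = (i * m + 1) + (if Even i then j else m - 1 - j) := by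
    intro i _
    unfold lbl
    ring
  rw [Finset.sum_congr rfl h1, Finset.sum_add_distrib, sum_ite_even]
  congr 1
  congr 1
  omega

lemma lbl_inj_aux {m i g i' g' : ℕ} (hg : g < m) (hg' : g' < m)
    (h : i * m + g = i' * m + g') : i = i' ∧ g = g' := by
  have h2 : i = i' := by
    rcases lt_trichotomy i i' with hlt | he | hlt
    · have hle : (i + 1) * m ≤ i' * m := Nat.mul_le_mul hlt (le_refl m)
      have : i * m + g < i' * m + g' := by
        calc i * m + g < i * m + m := by omega
          _ = (i + 1) * m := by ring
          _ ≤ i' * m := hle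
          _ ≤ i' * m + g' := Nat.le_add_right _ _
      omega
    · exact he
    · have hle : (i' + 1) * m ≤ i * m := Nat.mul_le_mul hlt (le_refl m)
      have : i' * m + g' < i * m + g := by
        calc i' * m + g' < i' * m + m := by omega
          _ = (i' + 1) * m := by ring
          _ ≤ i * m := hle
          _ ≤ i * m + g := Nat.le_add_right _ _
      omega
  subst h2
  exact ⟨rfl, Nat.add_left_cancel h⟩

theorem stmt_14 {V : Type*} [Fintype V] (G : SimpleGraph V) [DecidableRel G.Adj]
    (n m a b : ℕ) (hn : 2 ≤ n) (hne : Even n) (hm : 1 < m)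
    (hcard : Fintype.card V = m)
    (s : Set V) (hs : s.Nonempty) (hs' : sᶜ.Nonempty)
    (hbip : ∀ ⦃u v⦄, G.Adj u v → (u ∈ s ↔ v ∉ s))
    (ha : ∀ v ∈ s, G.degree v = a) (hb : ∀ v ∈ sᶜ, G.degree v = b)
    (hab : a ≠ b) :
    chiLD (lexProd G (⊥ : SimpleGraph (Fin n))) = 2 := by
  classical
  obtain ⟨k, hk⟩ := hne
  have hk2 : n = 2 * k := by omega
  subst hk2
  have hk1 : 1 ≤ k := by omega
  have hm0 : 0 < m := by omega
  have e : V ≃ Fin m := Fintype.equivFinOfCardEq hcard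
  have hNcard : Fintype.card (V × Fin (2 * k)) = m * (2 * k) := by
    simp [hcard]
  -- the labeling
  set f : V × Fin (2 * k) → ℕ := fun p => lbl m ((e p.1) : ℕ) ((p.2 : ℕ)) with hf
  -- the constant column sum
  set C : ℕ := (∑ i ∈ Finset.range (2 * k), (i * m + 1)) + k * (m - 1) with hCdef
  have hC0 : 0 < C := by
    have h1 : 2 * k ≤ ∑ i ∈ Finset.range (2 * k), (i * m + 1) := by
      calc 2 * k = ∑ _i ∈ Finset.range (2 * k), 1 := by simp
        _ ≤ _ := Finset.sum_le_sum (fun i _ => by omega)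
    omega
  have hcol : ∀ u : V, ∑ i : Fin (2 * k), f (u, i) = C := by
    intro u
    have h1 : ∑ i : Fin (2 * k), f (u, i) = ∑ i ∈ Finset.range (2 * k), lbl m ((e u) : ℕ) i :=
      Fin.sum_univ_eq_sum_range (lbl m ((e u) : ℕ)) (2 * k)
    rw [h1, lbl_sum m k _ (e u).2]
  -- basic adjacency facts in the lexicographic product
  have hadj : ∀ p q : V × Fin (2 * k),
      (lexProd G (⊥ : SimpleGraph (Fin (2 * k)))).Adj p q ↔ G.Adj p.1 q.1 := by
    intro p q
    constructor
    · rintro (h | ⟨_, h⟩)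
      · exact h
      · exact absurd h (by simp)
    · exact Or.inl
  -- the weight formula
  have hw : ∀ p : V × Fin (2 * k),
      ldWeight (lexProd G (⊥ : SimpleGraph (Fin (2 * k)))) f p = G.degree p.1 * C := by
    intro p
    have h1 : ∀ u : V,
        (∑ i : Fin (2 * k),
          if (lexProd G (⊥ : SimpleGraph (Fin (2 * k)))).Adj p (u, i) then f (u, i) else 0)
        = if G.Adj p.1 u then C else 0 := by
      intro u
      by_cases h : G.Adj p.1 u
      · rw [if_pos h, ← hcol u]
        refine Finset.sum_congr rfl fun i _ => ?_
        rw [if_pos ((hadj p (u, i)).mpr h)]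
      · rw [if_neg h]
        refine Finset.sum_eq_zero fun i _ => ?_
        rw [if_neg (fun hh => h ((hadj p (u, i)).mp hh))]
    have h2 : ldWeight (lexProd G (⊥ : SimpleGraph (Fin (2 * k)))) f p
        = ∑ u : V, if G.Adj p.1 u then C else 0 := by
      rw [ldWeight, Fintype.sum_prod_type]
      exact Finset.sum_congr rfl fun u _ => h1 u
    rw [h2, ← Finset.sum_filter, Finset.sum_const, ← SimpleGraph.neighborFinset_eq_filter,
      SimpleGraph.card_neighborFinset_eq_degree, smul_eq_mul]
  have hCab : a * C ≠ b * C := fun h => hab (Nat.eq_of_mul_eq_mul_right hC0 h)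
  -- the labeling is a bijection onto {1, …, mn}
  have hgb : ∀ (j : Fin m) (i : ℕ), (if Even i then (j : ℕ) else m - 1 - (j : ℕ)) < m := by
    intro j i
    split_ifs
    · exact j.2
    · omega
  have hbij : Set.BijOn f Set.univ (Set.Icc 1 (Fintype.card (V × Fin (2 * k)))) := by
    rw [hNcard]
    refine ⟨?_, ?_, ?_⟩
    · intro p _
      have hg := hgb (e p.1) (p.2 : ℕ)
      have hi : (p.2 : ℕ) < 2 * k := p.2.2
      simp only [Set.mem_Icc, hf, lbl]
      constructor
      · omega
      · calc (p.2 : ℕ) * m + (if Even (p.2 : ℕ) then ((e p.1) : ℕ) else m - 1 - ((e p.1) : ℕ)) + 1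
            ≤ (p.2 : ℕ) * m + m := by omega
          _ = ((p.2 : ℕ) + 1) * m := by ring
          _ ≤ (2 * k) * m := Nat.mul_le_mul hi (le_refl m)
          _ = m * (2 * k) := by ring
    · intro p _ q _ hpq
      simp only [hf, lbl] at hpq
      have h1 : (p.2 : ℕ) * m + (if Even (p.2 : ℕ) then ((e p.1) : ℕ) else m - 1 - ((e p.1) : ℕ))
          = (q.2 : ℕ) * m + (if Even (q.2 : ℕ) then ((e q.1) : ℕ) else m - 1 - ((e q.1) : ℕ)) := by
        omega
      obtain ⟨hi, hg⟩ := lbl_inj_aux (hgb (e p.1) (p.2 : ℕ)) (hgb (e q.1) (q.2 : ℕ)) h1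
      have h2 : p.2 = q.2 := Fin.ext hi
      have h3 : ((e p.1) : ℕ) = ((e q.1) : ℕ) := by
        rw [h2] at hg
        have hp1 := (e p.1).2
        have hq1 := (e q.1).2
        split_ifs at hg <;> omega
      have h4 : p.1 = q.1 := e.injective (Fin.ext h3)
      exact Prod.ext h4 h2
    · intro y hy
      obtain ⟨hy1, hy2⟩ := Set.mem_Icc.mp hy
      set t : ℕ := y - 1 with ht
      have htlt : t < (2 * k) * m := by
        have h : t < m * (2 * k) := by omega
        rwa [Nat.mul_comm] at h
      have hi : t / m < 2 * k := (Nat.div_lt_iff_lt_mul hm0).mpr htlt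
      have hr : t % m < m := Nat.mod_lt _ hm0
      have hdm : t / m * m + t % m = t := by
        rw [Nat.mul_comm]
        exact Nat.div_add_mod t m
      by_cases hev : Even (t / m)
      · refine ⟨(e.symm ⟨t % m, hr⟩, ⟨t / m, hi⟩), Set.mem_univ _, ?_⟩
        show lbl m ((e (e.symm ⟨t % m, hr⟩)) : ℕ) (t / m) = y
        rw [Equiv.apply_symm_apply]
        simp only [lbl, if_pos hev]
        show t / m * m + t % m + 1 = y
        rw [hdm]
        omega
      · have hj : m - 1 - t % m < m := by omega
        refine ⟨(e.symm ⟨m - 1 - t % m, hj⟩, ⟨t / m, hi⟩), Set.mem_univ _, ?_⟩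
        show lbl m ((e (e.symm ⟨m - 1 - t % m, hj⟩)) : ℕ) (t / m) = y
        rw [Equiv.apply_symm_apply]
        simp only [lbl, if_neg hev]
        show t / m * m + (m - 1 - (m - 1 - t % m)) + 1 = y
        rw [show m - 1 - (m - 1 - t % m) = t % m by omega, hdm]
        omega
  -- it is a local distance antimagic labeling
  have hLDAL : IsLDAL (lexProd G (⊥ : SimpleGraph (Fin (2 * k)))) f := by
    refine ⟨hbij, fun p q hpq => ?_⟩
    have hGadj : G.Adj p.1 q.1 := (hadj p q).mp hpq
    rw [hw p, hw q]
    by_cases hp : p.1 ∈ s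
    · have hq : q.1 ∈ sᶜ := (hbip hGadj).mp hp
      rw [ha p.1 hp, hb q.1 hq]
      exact hCab
    · have hq : q.1 ∈ s := by
        by_contra hq'
        exact hp ((hbip hGadj).mpr hq')
      rw [hb p.1 hp, ha q.1 hq]
      exact hCab.symm
  -- the image of the weight function is {aC, bC}
  have i0 : Fin (2 * k) := ⟨0, by omega⟩
  have himg : Finset.univ.image (ldWeight (lexProd G (⊥ : SimpleGraph (Fin (2 * k)))) f)
      = {a * C, b * C} := by
    apply Finset.Subset.antisymm
    · intro w hw'
      obtain ⟨p, _, rfl⟩ := Finset.mem_image.mp hw'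
      rw [hw p]
      by_cases hp : p.1 ∈ s
      · rw [ha p.1 hp]
        exact Finset.mem_insert_self _ _
      · rw [hb p.1 hp]
        exact Finset.mem_insert_of_mem (Finset.mem_singleton_self _)
    · intro w hw'
      obtain ⟨v0, hv0⟩ := hs
      obtain ⟨v1, hv1⟩ := hs'
      rcases Finset.mem_insert.mp hw' with rfl | hwb
      · exact Finset.mem_image.mpr ⟨(v0, i0), Finset.mem_univ _,
          by rw [hw]; rw [show (v0, i0).1 = v0 from rfl, ha v0 hv0]⟩
      · rw [Finset.mem_singleton.mp hwb]
        exact Finset.mem_image.mpr ⟨(v1, i0), Finset.mem_univ _,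
          by rw [hw]; rw [show (v1, i0).1 = v1 from rfl, hb v1 hv1]⟩
  have hmem2 : 2 ∈ {c | ∃ g : V × Fin (2 * k) → ℕ,
      IsLDAL (lexProd G (⊥ : SimpleGraph (Fin (2 * k)))) g ∧
      (Finset.univ.image (ldWeight (lexProd G (⊥ : SimpleGraph (Fin (2 * k)))) g)).card = c} := by
    exact ⟨f, hLDAL, by rw [himg]; exact Finset.card_pair hCab⟩
  -- there is an edge in G
  have hedge : ∃ x y, G.Adj x y := by
    by_cases ha0 : a = 0
    · have hb0 : b ≠ 0 := fun h => hab (by omega)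
      obtain ⟨v1, hv1⟩ := hs'
      have hd : 0 < G.degree v1 := by rw [hb v1 hv1]; omega
      obtain ⟨u, hu⟩ := (SimpleGraph.degree_pos_iff_exists_adj G v1).mp hd
      exact ⟨v1, u, hu⟩
    · obtain ⟨v0, hv0⟩ := hs
      have hd : 0 < G.degree v0 := by rw [ha v0 hv0]; omega
      obtain ⟨u, hu⟩ := (SimpleGraph.degree_pos_iff_exists_adj G v0).mp hd
      exact ⟨v0, u, hu⟩
  -- lower bound
  have hlb : ∀ c ∈ {c | ∃ g : V × Fin (2 * k) → ℕ,
      IsLDAL (lexProd G (⊥ : SimpleGraph (Fin (2 * k)))) g ∧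
      (Finset.univ.image (ldWeight (lexProd G (⊥ : SimpleGraph (Fin (2 * k)))) g)).card = c},
      2 ≤ c := by
    rintro c ⟨g, hg, rfl⟩
    obtain ⟨x, y, hxy⟩ := hedge
    have hadj' : (lexProd G (⊥ : SimpleGraph (Fin (2 * k)))).Adj (x, i0) (y, i0) := Or.inl hxy
    have hne' := hg.2 hadj'
    exact Finset.one_lt_card.mpr ⟨_, Finset.mem_image_of_mem _ (Finset.mem_univ (x, i0)),
      _, Finset.mem_image_of_mem _ (Finset.mem_univ (y, i0)), hne'⟩
  exact le_antisymm (Nat.sInf_le hmem2) (le_csInf ⟨2, hmem2⟩ hlb)
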